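/- Consider two agents with x_i' = v_i, v_1' = 0, and v_2'(t) = ψ(‖x₂(t−τ) − x₁(t−τ)‖)(v₁(t−τ) − v₂(t)) for t ≥ τ, with continuous initial data on [−τ, 0], where ψ : [0,∞) → (0,∞) is continuous, non-increasing, and satisfies ∫_a^∞ ψ(s) ds = ∞ for some a > 0. Then there exist constants C, B > 0 such that ‖v₂(t) − v₁(t)‖ ≤ C e^{−Bt} for all t ≥ 2τ, and sup_{t ≥ 0} ‖x₂(t) − x₁(t)‖ < ∞. -/

import Mathlib

set_option maxHeartbeats 1000000

open Set Filter intervalIntegral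

theorem stmt_11 (d : ℕ) (τ a : ℝ) (hτ : 0 < τ) (ha : 0 < a)
    (ψ : ℝ → ℝ) (hψ_cont : Continuous ψ) (hψ_pos : ∀ s ≥ (0:ℝ), 0 < ψ s)
    (hψ_mono : AntitoneOn ψ (Set.Ici 0))
    (hdiv : Filter.Tendsto (fun R => ∫ s in a..R, ψ s) Filter.atTop Filter.atTop)
    (x₁ x₂ v₁ v₂ : ℝ → EuclideanSpace ℝ (Fin d))
    (hcont : ContinuousOn x₁ (Set.Icc (-τ) 0) ∧ ContinuousOn x₂ (Set.Icc (-τ) 0) ∧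
      ContinuousOn v₁ (Set.Icc (-τ) 0) ∧ ContinuousOn v₂ (Set.Icc (-τ) 0))
    (hx₁ : ∀ t ≥ (0:ℝ), HasDerivAt x₁ (v₁ t) t)
    (hx₂ : ∀ t ≥ (0:ℝ), HasDerivAt x₂ (v₂ t) t)
    (hv₁ : ∀ t ≥ (0:ℝ), HasDerivAt v₁ 0 t)
    (hv₂ : ∀ t ≥ τ, HasDerivAt v₂
      (ψ (‖x₂ (t - τ) - x₁ (t - τ)‖) • (v₁ (t - τ) - v₂ t)) t) :
    (∃ C > (0:ℝ), ∃ B > (0:ℝ), ∀ t ≥ 2 * τ, ‖v₂ t - v₁ t‖ ≤ C * Real.exp (-B * t)) ∧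
    ∃ M : ℝ, ∀ t ≥ (0:ℝ), ‖x₂ t - x₁ t‖ ≤ M := by
  -- v₁ is constant on [0, ∞)
  have hV : ∀ t ≥ (0:ℝ), v₁ t = v₁ 0 := by
    intro t ht
    rcases eq_or_lt_of_le ht with h | h
    · rw [← h]
    · exact constant_of_has_deriv_right_zero
        (fun s hs => (hv₁ s hs.1).continuousAt.continuousWithinAt)
        (fun s hs => (hv₁ s hs.1).hasDerivWithinAt) t ⟨ht, le_refl t⟩
  set V : EuclideanSpace ℝ (Fin d) := v₁ 0 with hVdef
  set y : ℝ → EuclideanSpace ℝ (Fin d) := fun t => x₂ t - x₁ t with hydef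
  set w : ℝ → EuclideanSpace ℝ (Fin d) := fun t => v₂ t - V with hwdef
  have hyd : ∀ t ≥ (0:ℝ), HasDerivAt y (w t) t := by
    intro t ht
    have h := (hx₂ t ht).sub (hx₁ t ht)
    rw [hV t ht] at h
    exact h
  have hyc : ∀ t ≥ (0:ℝ), ContinuousAt y t := fun t ht => (hyd t ht).continuousAt
  set m : ℝ → ℝ := fun t => max (t - τ) 0 with hmdef
  have hmc : Continuous m := (continuous_id.sub continuous_const).max continuous_const
  have hmnn : ∀ t, 0 ≤ m t := fun t => le_max_right _ _
  set lam : ℝ → ℝ := fun t => ψ ‖y (m t)‖ with hlamdef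
  have hlamc : Continuous lam := by
    rw [continuous_iff_continuousAt]
    intro t
    exact hψ_cont.continuousAt.comp (((hyc (m t) (hmnn t)).comp hmc.continuousAt).norm)
  have hlampos : ∀ t, 0 < lam t := fun t => hψ_pos _ (norm_nonneg _)
  have hlameq : ∀ t ≥ τ, lam t = ψ ‖x₂ (t - τ) - x₁ (t - τ)‖ := by
    intro t ht
    simp only [hlamdef, hmdef, hydef, max_eq_left (sub_nonneg.2 ht)]
  -- the ODE for w
  have hw : ∀ t ≥ τ, HasDerivAt w ((-lam t) • w t) t := by
    intro t ht
    have h0 : (0:ℝ) ≤ t - τ := sub_nonneg.2 ht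
    have h := hv₂ t ht
    rw [hV (t - τ) h0] at h
    have h2 : HasDerivAt w (ψ ‖x₂ (t - τ) - x₁ (t - τ)‖ • (V - v₂ t)) t := h.sub_const V
    have h3 : ((-lam t) • w t : EuclideanSpace ℝ (Fin d))
        = ψ ‖x₂ (t - τ) - x₁ (t - τ)‖ • (V - v₂ t) := by
      rw [hlameq t ht, hwdef]
      simp [neg_smul, ← smul_neg, neg_sub]
    rw [h3]
    exact h2
  set Λ : ℝ → ℝ := fun t => ∫ s in τ..t, lam s with hΛdef
  have hΛ : ∀ t, HasDerivAt Λ (lam t) t := by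
    intro t
    exact intervalIntegral.integral_hasDerivAt_right (hlamc.intervalIntegrable τ t)
      (hlamc.stronglyMeasurableAtFilter _ _) hlamc.continuousAt
  have hΛc : Continuous Λ := by
    rw [continuous_iff_continuousAt]; exact fun t => (hΛ t).continuousAt
  have hΛτ : Λ τ = 0 := intervalIntegral.integral_same
  -- solve the ODE: w t = exp (-Λ t) • w τ for t ≥ τ
  have hwf : ∀ t ≥ τ, w t = Real.exp (-Λ t) • w τ := by
    intro t ht
    set g : ℝ → EuclideanSpace ℝ (Fin d) := fun s => Real.exp (Λ s) • w s with hgdef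
    have hg0 : ∀ s ≥ τ, HasDerivAt g 0 s := by
      intro s hs
      have h1 : HasDerivAt (fun u => Real.exp (Λ u)) (Real.exp (Λ s) * lam s) s := by
        simpa [mul_comm] using (hΛ s).exp
      have h2 := h1.smul (hw s hs)
      have h3 : (Real.exp (Λ s) • ((-lam s) • w s) + (Real.exp (Λ s) * lam s) • w s :
          EuclideanSpace ℝ (Fin d)) = 0 := by
        rw [smul_smul]
        rw [← add_smul]
        have : Real.exp (Λ s) * -lam s + Real.exp (Λ s) * lam s = 0 := by ring
        rw [this, zero_smul]
      rw [h3] at h2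
      exact h2
    have hgc : g t = g τ := by
      rcases eq_or_lt_of_le ht with h | h
      · rw [← h]
      · exact constant_of_has_deriv_right_zero
          (fun s hs => (hg0 s hs.1).continuousAt.continuousWithinAt)
          (fun s hs => (hg0 s hs.1).hasDerivWithinAt) t ⟨ht, le_refl t⟩
    have h4 : Real.exp (Λ t) • w t = w τ := by
      have := hgc
      simp only [hgdef, hΛτ, Real.exp_zero, one_smul] at this
      exact this
    rw [← h4, smul_smul, ← Real.exp_add, neg_add_cancel, Real.exp_zero, one_smul]
  set W : ℝ := ‖w τ‖ with hWdef
  have hWnn : 0 ≤ W := norm_nonneg _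
  have hwn : ∀ t ≥ τ, ‖w t‖ = Real.exp (-Λ t) * W := by
    intro t ht
    rw [hwf t ht, norm_smul, Real.norm_eq_abs, abs_of_pos (Real.exp_pos _)]
  have hE : Continuous (fun s => Real.exp (-Λ s)) := Real.continuous_exp.comp hΛc.neg
  set F : ℝ → ℝ := fun t => ‖y τ‖ + (∫ s in τ..t, Real.exp (-Λ s)) * W with hFdef
  have hF' : ∀ t, HasDerivAt F (Real.exp (-Λ t) * W) t := by
    intro t
    exact ((intervalIntegral.integral_hasDerivAt_right (hE.intervalIntegrable τ t)
      (hE.stronglyMeasurableAtFilter _ _) hE.continuousAt).mul_const W).const_add _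
  have hFsplit : ∀ s t : ℝ, F t = F s + (∫ u in s..t, Real.exp (-Λ u)) * W := by
    intro s t
    have := intervalIntegral.integral_add_adjacent_intervals (μ := MeasureTheory.volume)
      (hE.intervalIntegrable τ s) (hE.intervalIntegrable s t)
    simp only [hFdef]
    rw [← this]
    ring
  have hFmono : ∀ s t : ℝ, s ≤ t → F s ≤ F t := by
    intro s t hst
    rw [hFsplit s t]
    have h1 : 0 ≤ ∫ u in s..t, Real.exp (-Λ u) :=
      intervalIntegral.integral_nonneg hst (fun u _ => (Real.exp_pos _).le)
    nlinarith
  have hFτ : F τ = ‖y τ‖ := by simp [hFdef]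
  have hFnn : ∀ t ≥ τ, 0 ≤ F t := fun t ht =>
    le_trans (norm_nonneg _) (hFτ ▸ hFmono τ t ht)
  -- position bound in terms of F
  have hyF : ∀ t ≥ τ, ‖y t‖ ≤ F t := by
    intro t ht
    have h0τ : (0:ℝ) ≤ τ := hτ.le
    have key : ∫ s in τ..t, Real.exp (-Λ s) • w τ = y t - y τ := by
      apply intervalIntegral.integral_eq_sub_of_hasDerivAt
      · intro u hu
        rw [Set.uIcc_of_le ht] at hu
        have hu1 : τ ≤ u := hu.1
        have h := hyd u (le_trans h0τ hu1)
        rw [hwf u hu1] at h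
        exact h
      · have hint : IntervalIntegrable (fun s => Real.exp (-Λ s) • w τ)
            MeasureTheory.volume τ t := (hE.smul continuous_const).intervalIntegrable τ t
        exact hint
    have h1 : ‖y t‖ ≤ ‖y τ‖ + ‖y t - y τ‖ := by
      have := norm_add_le (y τ) (y t - y τ)
      simpa using this
    have h2 : ‖y t - y τ‖ ≤ (∫ s in τ..t, Real.exp (-Λ s)) * W := by
      rw [← key]
      calc ‖∫ s in τ..t, Real.exp (-Λ s) • w τ‖
          ≤ ∫ s in τ..t, ‖Real.exp (-Λ s) • w τ‖ :=
            intervalIntegral.norm_integral_le_integral_norm ht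
        _ = (∫ s in τ..t, Real.exp (-Λ s)) * W := by
            simp_rw [norm_smul, Real.norm_eq_abs, abs_of_pos (Real.exp_pos _)]
            rw [intervalIntegral.integral_mul_const]
    simp only [hFdef]
    linarith
  -- the Lyapunov function
  set Φ : ℝ → ℝ := fun r => ∫ u in (0:ℝ)..r, ψ u with hΦdef
  have hΦ' : ∀ r, HasDerivAt Φ (ψ r) r := by
    intro r
    exact intervalIntegral.integral_hasDerivAt_right (hψ_cont.intervalIntegrable 0 r)
      (hψ_cont.stronglyMeasurableAtFilter _ _) hψ_cont.continuousAt
  have hΛnn : ∀ t ≥ τ, 0 ≤ Λ t := fun t ht =>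
    intervalIntegral.integral_nonneg ht (fun u _ => (hlampos u).le)
  have hlamF : ∀ t ≥ 2 * τ, ψ (F t) ≤ lam t := by
    intro t ht
    have htτ : τ ≤ t - τ := by linarith
    have h1 : ‖y (t - τ)‖ ≤ F t := le_trans (hyF (t - τ) htτ)
      (hFmono (t - τ) t (by linarith))
    have h2 : lam t = ψ ‖y (t - τ)‖ := by
      simp only [hlamdef, hmdef, max_eq_left (sub_nonneg.2 (by linarith : τ ≤ t))]
    rw [h2]
    exact hψ_mono (Set.mem_Ici.2 (norm_nonneg _))
      (Set.mem_Ici.2 (hFnn t (by linarith))) h1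
  set G : ℝ → ℝ := fun t => Φ (F t) + Real.exp (-Λ t) * W with hGdef
  have hG' : ∀ t, HasDerivAt G
      (ψ (F t) * (Real.exp (-Λ t) * W) + Real.exp (-Λ t) * (-lam t) * W) t := by
    intro t
    have h1 : HasDerivAt (fun s => Φ (F s)) (ψ (F t) * (Real.exp (-Λ t) * W)) t :=
      (hΦ' (F t)).comp t (hF' t)
    have h2 : HasDerivAt (fun s => Real.exp (-Λ s)) (Real.exp (-Λ t) * (-lam t)) t :=
      (hΛ t).neg.exp
    exact h1.add (h2.mul_const W)
  have hGanti : AntitoneOn G (Set.Ici (2 * τ)) := by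
    apply antitoneOn_of_deriv_nonpos (convex_Ici _)
      (fun t _ => (hG' t).continuousAt.continuousWithinAt)
      (fun t ht => by
        rw [interior_Ici] at ht
        exact (hG' t).differentiableAt.differentiableWithinAt)
    intro t ht
    rw [interior_Ici] at ht
    rw [(hG' t).deriv]
    have h1 := hlamF t (le_of_lt ht)
    have h2 := Real.exp_pos (-Λ t)
    nlinarith [mul_nonneg (mul_nonneg h2.le hWnn) (sub_nonneg.2 h1)]
  set K : ℝ := Φ (F (2 * τ)) + W with hKdef
  have hΦFK : ∀ t ≥ 2 * τ, Φ (F t) ≤ K := by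
    intro t ht
    have h1 : G t ≤ G (2 * τ) := hGanti (Set.mem_Ici.2 (le_refl _)) (Set.mem_Ici.2 ht) ht
    have h2 : 0 ≤ Real.exp (-Λ t) * W := mul_nonneg (Real.exp_pos _).le hWnn
    have h3 : Real.exp (-Λ (2 * τ)) * W ≤ W := by
      have := hΛnn (2 * τ) (by linarith)
      nlinarith [Real.exp_le_one_iff.2 (neg_nonpos.2 this), Real.exp_pos (-Λ (2 * τ))]
    simp only [hGdef, hKdef] at h1 ⊢
    linarith
  -- Φ tends to infinity
  have hΦtop : Tendsto Φ atTop atTop := by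
    have heq : ∀ R, Φ R = (∫ u in (0:ℝ)..a, ψ u) + ∫ u in a..R, ψ u := by
      intro R
      rw [intervalIntegral.integral_add_adjacent_intervals
        (hψ_cont.intervalIntegrable 0 a) (hψ_cont.intervalIntegrable a R)]
    have h2 : Tendsto (fun R => (∫ u in (0:ℝ)..a, ψ u) + ∫ u in a..R, ψ u) atTop atTop :=
      tendsto_atTop_add_const_left _ _ hdiv
    exact h2.congr (fun R => (heq R).symm)
  obtain ⟨R₁, hR₁⟩ := Filter.eventually_atTop.1 (hΦtop.eventually_ge_atTop (K + 1))
  have hFbound : ∀ t ≥ 2 * τ, F t ≤ R₁ := by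
    intro t ht
    by_contra h
    push_neg at h
    have := hR₁ (F t) (le_of_lt h)
    have := hΦFK t ht
    linarith
  set R₀ : ℝ := max R₁ (F (2 * τ)) with hR₀def
  have hR₀nn : 0 ≤ R₀ := le_trans (hFnn (2 * τ) (by linarith)) (le_max_right _ _)
  have hyR : ∀ s ≥ τ, ‖y s‖ ≤ R₀ := by
    intro s hs
    rcases le_total s (2 * τ) with h | h
    · exact le_trans (hyF s hs) (le_trans (hFmono s (2 * τ) h) (le_max_right _ _))
    · exact le_trans (hyF s hs) (le_trans (hFbound s h) (le_max_left _ _))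
  set B : ℝ := ψ R₀ with hBdef
  have hB : 0 < B := hψ_pos R₀ hR₀nn
  have hlamB : ∀ t ≥ 2 * τ, B ≤ lam t := by
    intro t ht
    have h2 : lam t = ψ ‖y (t - τ)‖ := by
      simp only [hlamdef, hmdef, max_eq_left (sub_nonneg.2 (by linarith : τ ≤ t))]
    rw [h2]
    exact hψ_mono (Set.mem_Ici.2 (norm_nonneg _)) (Set.mem_Ici.2 hR₀nn)
      (hyR (t - τ) (by linarith))
  have hΛB : ∀ t ≥ 2 * τ, B * (t - 2 * τ) ≤ Λ t := by
    intro t ht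
    have hsplit : Λ t = (∫ s in τ..(2 * τ), lam s) + ∫ s in (2 * τ)..t, lam s := by
      rw [intervalIntegral.integral_add_adjacent_intervals
        (hlamc.intervalIntegrable _ _) (hlamc.intervalIntegrable _ _)]
    have h1 : 0 ≤ ∫ s in τ..(2 * τ), lam s :=
      intervalIntegral.integral_nonneg (by linarith) (fun u _ => (hlampos u).le)
    have h2 : B * (t - 2 * τ) ≤ ∫ s in (2 * τ)..t, lam s := by
      have := intervalIntegral.integral_mono_on (μ := MeasureTheory.volume) ht
        (_root_.intervalIntegrable_const (c := B)) (hlamc.intervalIntegrable _ _)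
        (fun u hu => hlamB u hu.1)
      rw [intervalIntegral.integral_const, smul_eq_mul] at this
      linarith [this]
    rw [hsplit]
    linarith
  constructor
  · refine ⟨W * Real.exp (2 * B * τ) + 1, by positivity, B, hB, ?_⟩
    intro t ht
    have h0t : (0:ℝ) ≤ t := by linarith
    have hτt : τ ≤ t := by linarith
    rw [hV t h0t]
    show ‖w t‖ ≤ _
    rw [hwn t hτt]
    have h2 : Real.exp (-Λ t) ≤ Real.exp (2 * B * τ) * Real.exp (-B * t) := by
      rw [← Real.exp_add]
      apply Real.exp_le_exp.2
      have := hΛB t ht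
      linarith
    have h3 : Real.exp (-Λ t) * W ≤ Real.exp (2 * B * τ) * Real.exp (-B * t) * W :=
      mul_le_mul_of_nonneg_right h2 hWnn
    have h4 : (W * Real.exp (2 * B * τ) + 1) * Real.exp (-B * t)
        = Real.exp (2 * B * τ) * Real.exp (-B * t) * W + Real.exp (-B * t) := by ring
    rw [h4]
    linarith [Real.exp_pos (-B * t)]
  · have hcomp : ∃ C₀, ∀ s ∈ Set.Icc (0:ℝ) τ, ‖y s‖ ≤ C₀ :=
      (isCompact_Icc).exists_bound_of_continuousOn
        (fun s hs => (hyc s hs.1).continuousWithinAt)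
    obtain ⟨C₀, hC₀⟩ := hcomp
    refine ⟨max C₀ R₀, ?_⟩
    intro t ht
    rcases le_total t τ with h | h
    · exact le_trans (hC₀ t ⟨ht, h⟩) (le_max_left _ _)
    · exact le_trans (hyR t h) (le_max_right _ _)
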